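/- Let T1(n,k) = ∑_{i=n-k}^{n} (-1)^{n-k-i} 2^{n-i} C(n,i) and T2(n,k) = ∑_{i=n-k}^{n} C(n,i) C(i-1, n-k-1) (with C(-1,-1)=1). Then T1(n,k) = T2(n,k) for all 0 ≤ k ≤ n. -/

import Mathlib

/-- Integer binomial coefficient `C a b`, zero for `b < 0` or `b > a`, with the
additional convention `C (-1) (-1) = 1`. -/
def ibc (a b : ℤ) : ℤ :=
  if a = -1 ∧ b = -1 then 1
  else if 0 ≤ b ∧ b ≤ a then (a.toNat).choose b.toNat else 0

/-- Nat-indexed version of `ibc (i-1) (m-1)`. -/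
def cc (i m : ℕ) : ℤ :=
  if i = 0 then (if m = 0 then 1 else 0)
  else if m = 0 then 0 else ((i - 1).choose (m - 1) : ℤ)

lemma ibc_cast (i m : ℕ) : ibc ((i : ℤ) - 1) ((m : ℤ) - 1) = cc i m := by
  rcases Nat.eq_zero_or_pos i with hi | hi <;> rcases Nat.eq_zero_or_pos m with hm | hm
  · subst hi; subst hm; rfl
  · subst hi
    unfold ibc cc
    rw [if_neg (by omega), if_neg (by omega), if_pos rfl, if_neg (by omega)]
  · subst hm
    unfold ibc cc
    rw [if_neg (by omega), if_neg (by omega), if_neg (by omega), if_pos rfl]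
  · unfold ibc cc
    rw [if_neg (show ¬(((i : ℤ) - 1 = -1) ∧ ((m : ℤ) - 1 = -1)) by omega),
        if_neg (show ¬ i = 0 by omega), if_neg (show ¬ m = 0 by omega)]
    rcases le_or_gt m i with hmi | hmi
    · rw [if_pos (show (0 : ℤ) ≤ (m : ℤ) - 1 ∧ (m : ℤ) - 1 ≤ (i : ℤ) - 1 by omega)]
      rw [show (((i : ℤ) - 1).toNat) = i - 1 by omega,
          show (((m : ℤ) - 1).toNat) = m - 1 by omega]
    · rw [if_neg (show ¬((0 : ℤ) ≤ (m : ℤ) - 1 ∧ (m : ℤ) - 1 ≤ (i : ℤ) - 1) by omega),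
          Nat.choose_eq_zero_of_lt (by omega)]
      simp

lemma ibc_nat (a b : ℕ) (hb : b ≤ a) : ibc a b = a.choose b := by
  unfold ibc
  rw [if_neg (by omega), if_pos (by omega)]
  simp

lemma cc_self (m : ℕ) : cc m m = 1 := by
  unfold cc
  rcases Nat.eq_zero_or_pos m with hm | hm
  · subst hm; norm_num
  · rw [if_neg (by omega), if_neg (by omega), Nat.choose_self, Nat.cast_one]

lemma cc_pascal (i m : ℕ) (hi : 1 ≤ i) : cc i m = (i.choose m : ℤ) - cc i (m + 1) := by
  have hi0 : ¬ i = 0 := by omega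
  rcases Nat.eq_zero_or_pos m with hm | hm
  · subst hm
    simp only [cc, if_neg hi0]
    norm_num
  · have hp := Nat.choose_succ_succ (i - 1) (m - 1)
    rw [show (i - 1).succ = i by omega, show (m - 1).succ = m by omega] at hp
    simp only [cc, if_neg hi0, if_neg (show ¬ m = 0 by omega),
      if_neg (show ¬ m + 1 = 0 by omega), Nat.add_sub_cancel]
    rw [hp]
    push_cast
    ring

/-- The alternating sum. -/
def S (n k : ℕ) : ℤ :=
  ∑ i ∈ Finset.Icc (n - k) n, (-1 : ℤ) ^ (i - (n - k)) * 2 ^ (n - i) * (n.choose i)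

/-- The binomial product sum (nat-indexed). -/
def T (n k : ℕ) : ℤ :=
  ∑ i ∈ Finset.Icc (n - k) n, (n.choose i : ℤ) * cc i (n - k)

lemma S_zero (n : ℕ) : S n 0 = 1 := by
  unfold S
  simp

lemma T_zero (n : ℕ) : T n 0 = 1 := by
  unfold T
  simp [cc_self]

lemma vandermonde (m n : ℕ) (h : m ≤ n) :
    ∑ i ∈ Finset.Icc m n, (n.choose i : ℤ) * (i.choose m) = 2 ^ (n - m) * n.choose m := by
  have key : ∀ i ∈ Finset.Icc m n, (n.choose i : ℤ) * (i.choose m)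
      = (n.choose m : ℤ) * ((n - m).choose (i - m)) := by
    intro i hi
    simp only [Finset.mem_Icc] at hi
    have := Nat.choose_mul (n := n) hi.1
    exact_mod_cast congrArg (Nat.cast : ℕ → ℤ) this
  rw [Finset.sum_congr rfl key, ← Finset.mul_sum]
  rw [show Finset.Icc m n = Finset.Ico m (n + 1) by rfl, Finset.sum_Ico_eq_sum_range]
  have h1 : ∀ j ∈ Finset.range (n + 1 - m), (((n - m).choose (m + j - m) : ℤ))
      = ((n - m).choose j : ℤ) := by
    intro j _; rw [Nat.add_sub_cancel_left]
  rw [Finset.sum_congr rfl h1, show n + 1 - m = (n - m) + 1 by omega]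
  have h2 := Nat.sum_range_choose (n - m)
  have h3 : (∑ j ∈ Finset.range (n - m + 1), ((n - m).choose j : ℤ)) = 2 ^ (n - m) := by
    exact_mod_cast congrArg (Nat.cast : ℕ → ℤ) h2
  rw [h3]; ring

lemma S_rec (n k : ℕ) (h : k + 1 ≤ n) :
    S n (k + 1) = 2 ^ (k + 1) * (n.choose (k + 1)) - S n k := by
  set m := n - (k + 1) with hm
  have hnk : n - k = m + 1 := by omega
  unfold S
  rw [← hm, hnk, Finset.Icc_eq_cons_Ioc (by omega), Finset.sum_cons, ← Finset.Icc_add_one_left_eq_Ioc]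
  have htail : ∑ i ∈ Finset.Icc (m + 1) n, (-1 : ℤ) ^ (i - m) * 2 ^ (n - i) * (n.choose i)
      = -∑ i ∈ Finset.Icc (m + 1) n, (-1 : ℤ) ^ (i - (m + 1)) * 2 ^ (n - i) * (n.choose i) := by
    rw [← Finset.sum_neg_distrib]
    apply Finset.sum_congr rfl
    intro i hi
    simp only [Finset.mem_Icc] at hi
    rw [show i - m = (i - (m + 1)) + 1 by omega, pow_succ]
    ring
  rw [htail]
  have h1 : n - m = k + 1 := by omega
  have h2 : n.choose m = n.choose (k + 1) := by
    rw [hm, Nat.choose_symm h]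
  rw [Nat.sub_self, h1, h2]
  ring

lemma T_rec (n k : ℕ) (h : k + 1 ≤ n) :
    T n (k + 1) = 2 ^ (k + 1) * (n.choose (k + 1)) - T n k := by
  set m := n - (k + 1) with hm
  have hnk : n - k = m + 1 := by omega
  unfold T
  rw [← hm, hnk, Finset.Icc_eq_cons_Ioc (by omega), Finset.sum_cons, ← Finset.Icc_add_one_left_eq_Ioc]
  have htail : ∑ i ∈ Finset.Icc (m + 1) n, (n.choose i : ℤ) * cc i m
      = ∑ i ∈ Finset.Icc (m + 1) n, ((n.choose i : ℤ) * (i.choose m)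
          - (n.choose i : ℤ) * cc i (m + 1)) := by
    apply Finset.sum_congr rfl
    intro i hi
    simp only [Finset.mem_Icc] at hi
    rw [cc_pascal i m (by omega)]
    ring
  rw [htail, Finset.sum_sub_distrib]
  have hv : ∑ i ∈ Finset.Icc (m + 1) n, (n.choose i : ℤ) * (i.choose m)
      = 2 ^ (k + 1) * (n.choose m) - (n.choose m) := by
    have hsplit : Finset.Icc m n = (Finset.Ioc m n).cons m Finset.left_notMem_Ioc :=
      Finset.Icc_eq_cons_Ioc (by omega)
    have hva := vandermonde m n (by omega)
    rw [hsplit, Finset.sum_cons, ← Finset.Icc_add_one_left_eq_Ioc, show n - m = k + 1 by omega,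
      Nat.choose_self] at hva
    push_cast at hva ⊢
    linarith
  rw [hv, cc_self]
  have h2 : (n.choose m : ℤ) = n.choose (k + 1) := by
    rw [hm, Nat.choose_symm h]
  rw [h2]
  ring

lemma S_eq_T (n k : ℕ) (h : k ≤ n) : S n k = T n k := by
  induction k with
  | zero => rw [S_zero, T_zero]
  | succ k ih =>
    rw [S_rec n k h, T_rec n k h, ih (by omega)]

theorem stmt5 (n k : ℕ) (h : k ≤ n) :
    ∑ i ∈ Finset.Icc (n - k) n, (-1 : ℤ) ^ (i - (n - k)) * 2 ^ (n - i) * (n.choose i)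
      = ∑ i ∈ Finset.Icc ((n : ℤ) - k) (n : ℤ), ibc n i * ibc (i - 1) ((n : ℤ) - k - 1) := by
  have hcast : ((n - k : ℕ) : ℤ) = (n : ℤ) - k := by
    push_cast [Nat.cast_sub h]; ring
  have hrhs : ∑ i ∈ Finset.Icc ((n : ℤ) - k) (n : ℤ), ibc n i * ibc (i - 1) ((n : ℤ) - k - 1)
      = T n k := by
    rw [← hcast]
    unfold T
    refine Finset.sum_nbij' (fun i => i.toNat) (fun i => (i : ℤ)) ?_ ?_ ?_ ?_ ?_
    · intro a ha; simp only [Finset.mem_Icc] at ha ⊢; omega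
    · intro a ha; simp only [Finset.mem_Icc] at ha ⊢
      constructor
      · exact_mod_cast ha.1
      · exact_mod_cast ha.2
    · intro a ha; simp only [Finset.mem_Icc] at ha
      simp only [Int.toNat_of_nonneg (by omega : (0 : ℤ) ≤ a)]
    · intro a ha; simp
    · intro a ha
      simp only [Finset.mem_Icc] at ha
      have h1 : ((a.toNat : ℤ)) = a := Int.toNat_of_nonneg (by omega)
      show ibc n a * ibc (a - 1) (((n - k : ℕ) : ℤ) - 1)
          = (n.choose a.toNat : ℤ) * cc a.toNat (n - k)
      rw [← h1, ibc_nat n a.toNat (by omega), ibc_cast a.toNat (n - k),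
        Int.toNat_natCast]
  rw [hrhs]
  exact S_eq_T n k h
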